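/- Let Φ ∈ H^∞(𝕋, B(E)) and α ∈ 𝔻. If the Poisson integral P[Φ](α) is not injective, then, with M := ker P[Φ](α) (a nonzero closed subspace of E), the Blaschke-Potapov factor P := b_α P_M + (I_E − P_M) is a nontrivial right inner divisor of Φ. -/

import Mathlib

open MeasureTheory Complex

noncomputable section

/-- Normalized arc-length (Haar) measure on the unit circle `𝕋`, realized as a
measure on `ℂ` supported on the unit circle. -/
def mT : Measure ℂ :=
  Measure.map (fun t : ℝ => Complex.exp (t * Complex.I))
    ((ENNReal.ofReal (2 * Real.pi))⁻¹ • volume.restrict (Set.Ioc 0 (2 * Real.pi)))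

variable {D E E' : Type*}
  [NormedAddCommGroup D] [InnerProductSpace ℂ D] [CompleteSpace D]
  [NormedAddCommGroup E] [InnerProductSpace ℂ E] [CompleteSpace E]
  [NormedAddCommGroup E'] [InnerProductSpace ℂ E'] [CompleteSpace E']

/-- The `n`-th Fourier coefficient `Φ̂(n)x = ∫_𝕋 z̄ⁿ Φ(z)x dm(z)` of an
operator-valued function, applied to the vector `x`. -/
def fc (Φ : ℂ → D →L[ℂ] E) (n : ℤ) (x : D) : E :=
  ∫ z, ((starRingEnd ℂ) z) ^ n • (Φ z x) ∂mT

/-- Membership in `H^∞(𝕋, B(D,E))`: SOT-measurable, essentially bounded in operator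
norm, with vanishing negative Fourier coefficients. -/
structure MemHinf (Φ : ℂ → D →L[ℂ] E) : Prop where
  meas : ∀ x : D, AEStronglyMeasurable (fun z => Φ z x) mT
  bdd : ∃ r : ℝ, ∀ᵐ z ∂mT, ‖Φ z‖ ≤ r
  neg : ∀ n : ℤ, n < 0 → ∀ x : D, fc Φ n x = 0

/-- An inner function: `Φ ∈ H^∞` with `Φ(z)*Φ(z) = I` a.e. -/
def IsInnerFn (Φ : ℂ → D →L[ℂ] E) : Prop :=
  MemHinf Φ ∧ ∀ᵐ z ∂mT,
    (ContinuousLinearMap.adjoint (Φ z)).comp (Φ z) = ContinuousLinearMap.id ℂ D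

/-- A two-sided inner function: inner and `Φ(z)Φ(z)* = I` a.e. -/
def IsTwoSidedInner (Φ : ℂ → D →L[ℂ] E) : Prop :=
  IsInnerFn Φ ∧ ∀ᵐ z ∂mT,
    (Φ z).comp (ContinuousLinearMap.adjoint (Φ z)) = ContinuousLinearMap.id ℂ E

/-- `Θ` is a left inner divisor of `Φ`: `Θ` is inner and `Φ = Θ A` for some `A ∈ H^∞`. -/
def IsLeftInnerDiv (Θ : ℂ → E' →L[ℂ] E) (Φ : ℂ → D →L[ℂ] E) : Prop :=
  IsInnerFn Θ ∧ ∃ A : ℂ → D →L[ℂ] E', MemHinf A ∧ ∀ᵐ z ∂mT, Φ z = (Θ z).comp (A z)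

/-- `Ω` is a right inner divisor of `Φ`: `Ω` is inner and `Φ = B Ω` for some `B ∈ H^∞`. -/
def IsRightInnerDiv (Ω : ℂ → D →L[ℂ] E') (Φ : ℂ → D →L[ℂ] E) : Prop :=
  IsInnerFn Ω ∧ ∃ B : ℂ → E' →L[ℂ] E, MemHinf B ∧ ∀ᵐ z ∂mT, Φ z = (B z).comp (Ω z)

/-- `Δ` is an inner divisor of `Φ`: both a left and a right inner divisor. -/
def IsInnerDiv (Δ Φ : ℂ → E →L[ℂ] E) : Prop :=
  IsLeftInnerDiv Δ Φ ∧ IsRightInnerDiv Δ Φ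

/-- A unitary operator between Hilbert spaces. -/
def IsUnitaryOp (U : D →L[ℂ] E) : Prop :=
  (ContinuousLinearMap.adjoint U).comp U = ContinuousLinearMap.id ℂ D ∧
    U.comp (ContinuousLinearMap.adjoint U) = ContinuousLinearMap.id ℂ E

/-- An orthogonal projection: idempotent and self-adjoint. -/
def IsOrthoProj (P : E →L[ℂ] E) : Prop :=
  P.comp P = P ∧ ContinuousLinearMap.adjoint P = P

/-- A partial isometry: `T T* T = T`. -/
def IsPartialIsom (T : D →L[ℂ] E) : Prop :=
  (T.comp (ContinuousLinearMap.adjoint T)).comp T = T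

/-- The Blaschke factor `b_α(z) = (z - α)/(1 - ᾱ z)`. -/
def blaschke (α z : ℂ) : ℂ := (z - α) / (1 - (starRingEnd ℂ) α * z)

/-- The Poisson integral of `Φ ∈ H^∞` at `ζ ∈ 𝔻`, applied to the vector `x`:
`P[Φ](ζ)x = Σ_{n ≥ 0} Φ̂(n)x ζⁿ`. -/
def poissonFn (Φ : ℂ → D →L[ℂ] E) (ζ : ℂ) (x : D) : E :=
  ∑' n : ℕ, ζ ^ n • fc Φ (n : ℤ) x

/-- The `n`-th Fourier coefficient of a vector-valued function. -/
def vfc (f : ℂ → E) (n : ℤ) : E :=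
  ∫ z, ((starRingEnd ℂ) z) ^ n • f z ∂mT

/-- Membership in `H²(𝕋, E)`: square Bochner-integrable with vanishing
negative Fourier coefficients. -/
def MemH2 (f : ℂ → E) : Prop :=
  MemLp f 2 mT ∧ ∀ n : ℤ, n < 0 → vfc f n = 0

/-- A finite Blaschke product `θ = ∏ b_{αₙ}` with all `αₙ ∈ 𝔻`. -/
def IsFiniteBlaschkeProd (θ : ℂ → ℂ) : Prop :=
  ∃ (M : ℕ) (α : Fin M → ℂ), (∀ i, ‖α i‖ < 1) ∧ ∀ z, θ z = ∏ i, blaschke (α i) z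

/-- `Φ ∈ H^∞(𝕋, B(D,E))` is rational: `θ H²(𝕋,E) ⊆ ker H_{Φ*}` for some finite
Blaschke product `θ`, where `ker H_{Φ*} = {f ∈ H²(𝕋,E) : Φ*f ∈ H²(𝕋,D)}`. -/
def IsRationalFn (Φ : ℂ → D →L[ℂ] E) : Prop :=
  ∃ θ : ℂ → ℂ, IsFiniteBlaschkeProd θ ∧
    ∀ f : ℂ → E, MemH2 f →
      MemH2 (fun z => θ z • f z) ∧
      MemH2 (fun z => θ z • (ContinuousLinearMap.adjoint (Φ z)) (f z))

/-- A finite Blaschke-Potapov product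
`Δ = V ∏ₘ (b_{αₘ} Pₘ + (I - Pₘ))` with `V` a constant unitary, `αₘ ∈ 𝔻` and
`Pₘ` orthogonal projections. -/
def IsBPProduct (Δ : ℂ → E →L[ℂ] E) : Prop :=
  ∃ (M : ℕ) (V : E →L[ℂ] E) (α : Fin M → ℂ) (P : Fin M → E →L[ℂ] E),
    IsUnitaryOp V ∧ (∀ i, ‖α i‖ < 1) ∧ (∀ i, IsOrthoProj (P i)) ∧
    ∀ᵐ z ∂mT, Δ z = V * (List.ofFn fun i => blaschke (α i) z • P i + (1 - P i)).prod

/-- `Φ` and `Ψ` (with values in operators into the same space `E`) are left coprime: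
every common left inner divisor is a constant unitary. -/
def LeftCoprime {D₁ D₂ : Type*}
    [NormedAddCommGroup D₁] [InnerProductSpace ℂ D₁] [CompleteSpace D₁]
    [NormedAddCommGroup D₂] [InnerProductSpace ℂ D₂] [CompleteSpace D₂]
    (Φ : ℂ → D₁ →L[ℂ] E) (Ψ : ℂ → D₂ →L[ℂ] E) : Prop :=
  ∀ (F : Type) (_ : NormedAddCommGroup F) (_ : InnerProductSpace ℂ F) (_ : CompleteSpace F)
    (Θ : ℂ → F →L[ℂ] E), IsLeftInnerDiv Θ Φ → IsLeftInnerDiv Θ Ψ →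
      ∃ U : F →L[ℂ] E, IsUnitaryOp U ∧ ∀ᵐ z ∂mT, Θ z = U


set_option linter.unusedSectionVars false
set_option linter.unusedVariables false

-- ### auxiliary lemmas

lemma bp_meas_exp : Measurable fun t : ℝ => Complex.exp (t * Complex.I) :=
  ((Complex.continuous_ofReal.mul continuous_const).cexp).measurable

instance : IsProbabilityMeasure mT := by
  constructor
  rw [mT, Measure.map_apply bp_meas_exp MeasurableSet.univ]
  simp only [Set.preimage_univ, Measure.smul_apply, Measure.restrict_apply MeasurableSet.univ,
    Set.univ_inter, Real.volume_Ioc, smul_eq_mul, sub_zero]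
  exact ENNReal.inv_mul_cancel (by positivity) ENNReal.ofReal_ne_top

lemma bp_ae_norm : ∀ᵐ z ∂mT, ‖z‖ = 1 := by
  rw [mT, ae_map_iff bp_meas_exp.aemeasurable (by
    exact measurable_norm (measurableSet_singleton 1) : MeasurableSet {z : ℂ | ‖z‖ = 1})]
  filter_upwards with t
  simp [Complex.norm_exp_ofReal_mul_I]

lemma bp_integral_zpow {m : ℤ} (hm : m ≠ 0) : ∫ z, z ^ m ∂mT = 0 := by
  have hms : AEStronglyMeasurable (fun z : ℂ => z ^ m)
      (Measure.map (fun t : ℝ => Complex.exp (t * Complex.I))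
        ((ENNReal.ofReal (2 * Real.pi))⁻¹ • volume.restrict (Set.Ioc 0 (2 * Real.pi)))) :=
    Measurable.aestronglyMeasurable (measurable_id.pow_const m)
  rw [mT, integral_map bp_meas_exp.aemeasurable hms]
  rw [integral_smul_measure]
  have : ∀ t : ℝ, Complex.exp (t * Complex.I) ^ m = Complex.exp ((m : ℂ) * Complex.I * t) := by
    intro t
    rw [← Complex.exp_int_mul]; ring_nf
  simp_rw [this]
  have h2π : (0:ℝ) ≤ 2 * Real.pi := by positivity
  rw [← intervalIntegral.integral_of_le h2π]
  rw [integral_exp_mul_complex (by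
    simp [Complex.ext_iff, hm, Complex.I_ne_zero])]
  have : Complex.exp ((m:ℂ) * Complex.I * (2 * Real.pi)) = 1 := by
    rw [show (m:ℂ) * Complex.I * (2*Real.pi) = (m:ℂ) * (2 * Real.pi * Complex.I) by ring]
    exact Complex.exp_int_mul_two_pi_mul_I m
  simp [this]

variable {F : Type*} [NormedAddCommGroup F] [NormedSpace ℂ F] [CompleteSpace F]

lemma bp_integral_zpow_smul {m : ℤ} (hm : m ≠ 0) (v : F) : ∫ z, z ^ m • v ∂mT = 0 := by
  rw [integral_smul_const, bp_integral_zpow hm, zero_smul]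

lemma bp_conj_mul_self {z : ℂ} (hz : ‖z‖ = 1) : (starRingEnd ℂ) z * z = 1 := by
  rw [mul_comm, Complex.mul_conj, Complex.normSq_eq_norm_sq, hz]
  norm_num

lemma bp_conj_eq_inv {z : ℂ} (hz : ‖z‖ = 1) : (starRingEnd ℂ) z = z⁻¹ :=
  eq_inv_of_mul_eq_one_left (bp_conj_mul_self hz)

lemma bp_ne_zero {z : ℂ} (hz : ‖z‖ = 1) : z ≠ 0 := by
  intro h; rw [h] at hz; simp at hz

lemma bp_integral_conj_zpow_smul {m : ℤ} (hm : m ≠ 0) (v : F) :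
    ∫ z, ((starRingEnd ℂ) z) ^ m • v ∂mT = 0 := by
  rw [integral_congr_ae (g := fun z => z ^ (-m) • v)
    (bp_ae_norm.mono fun z hz => by rw [bp_conj_eq_inv hz, inv_zpow, ← zpow_neg])]
  exact bp_integral_zpow_smul (neg_ne_zero.mpr hm) v

lemma bp_integrable_of_bdd {g : ℂ → F} (hm : AEStronglyMeasurable g mT) {C : ℝ}
    (h : ∀ᵐ z ∂mT, ‖g z‖ ≤ C) : Integrable g mT :=
  (integrable_const C).mono' hm h

lemma bp_bdd' {Φ : ℂ → D →L[ℂ] E} (hΦ : MemHinf Φ) :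
    ∃ r : ℝ, 0 ≤ r ∧ ∀ᵐ z ∂mT, ‖Φ z‖ ≤ r := by
  obtain ⟨r, hr⟩ := hΦ.bdd
  exact ⟨max r 0, le_max_right _ _, hr.mono fun z h => h.trans (le_max_left _ _)⟩

lemma bp_asm_integrand {Φ : ℂ → D →L[ℂ] E} (hΦ : MemHinf Φ) (n : ℤ) (x : D) :
    AEStronglyMeasurable (fun z => ((starRingEnd ℂ) z) ^ n • Φ z x) mT :=
  ((continuous_conj.measurable.pow_const n).aestronglyMeasurable).smul (hΦ.meas x)

lemma bp_norm_conj_zpow {z : ℂ} (hz : ‖z‖ = 1) (n : ℤ) : ‖((starRingEnd ℂ) z) ^ n‖ = 1 := by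
  rw [norm_zpow, RCLike.norm_conj, hz, one_zpow]

lemma bp_integrable_integrand {Φ : ℂ → D →L[ℂ] E} (hΦ : MemHinf Φ) (n : ℤ) (x : D) :
    Integrable (fun z => ((starRingEnd ℂ) z) ^ n • Φ z x) mT := by
  obtain ⟨r, hr0, hr⟩ := bp_bdd' hΦ
  refine bp_integrable_of_bdd (bp_asm_integrand hΦ n x) (C := r * ‖x‖) ?_
  filter_upwards [bp_ae_norm, hr] with z hz hrz
  rw [norm_smul, bp_norm_conj_zpow hz, one_mul]
  exact (Φ z).le_opNorm x |>.trans (mul_le_mul_of_nonneg_right hrz (norm_nonneg x) |>.trans_eq rfl)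

lemma bp_fc_norm {Φ : ℂ → D →L[ℂ] E} (hΦ : MemHinf Φ) {r : ℝ}
    (hr : ∀ᵐ z ∂mT, ‖Φ z‖ ≤ r) (n : ℤ) (x : D) : ‖fc Φ n x‖ ≤ r * ‖x‖ := by
  have := norm_integral_le_of_norm_le_const (μ := mT)
    (f := fun z => ((starRingEnd ℂ) z) ^ n • Φ z x) (C := r * ‖x‖) ?_
  · simpa [fc] using this
  · filter_upwards [bp_ae_norm, hr] with z hz hrz
    rw [norm_smul, bp_norm_conj_zpow hz, one_mul]
    exact (Φ z).le_opNorm x |>.trans (mul_le_mul_of_nonneg_right hrz (norm_nonneg x))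

lemma bp_fc_sub {Φ : ℂ → D →L[ℂ] E} (hΦ : MemHinf Φ) (n : ℤ) (a b : D) :
    fc Φ n (a - b) = fc Φ n a - fc Φ n b := by
  unfold fc
  rw [← integral_sub (bp_integrable_integrand hΦ n a) (bp_integrable_integrand hΦ n b)]
  congr 1; funext z; rw [map_sub, smul_sub]

lemma bp_summable_fc {Φ : ℂ → D →L[ℂ] E} (hΦ : MemHinf Φ) {α : ℂ} (hα : ‖α‖ < 1)
    (x : D) (m : ℕ → ℤ) : Summable fun k : ℕ => α ^ k • fc Φ (m k) x := by
  obtain ⟨r, hr0, hr⟩ := bp_bdd' hΦ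
  refine Summable.of_norm_bounded (g := fun k => (r * ‖x‖) * ‖α‖ ^ k)
    ((summable_geometric_of_lt_one (norm_nonneg α) hα).mul_left _) fun k => ?_
  rw [norm_smul, norm_pow, mul_comm]
  exact mul_le_mul_of_nonneg_right (bp_fc_norm hΦ hr _ x) (by positivity)

lemma bp_tsum_shift {Φ : ℂ → D →L[ℂ] E} (hΦ : MemHinf Φ) {α : ℂ} (hα : ‖α‖ < 1)
    (y : D) {n : ℤ} (hn : n ≤ 0) :
    ∑' k : ℕ, α ^ k • fc Φ (n + k) y = α ^ (-n).toNat • poissonFn Φ α y := by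
  set N : ℕ := (-n).toNat with hN
  have hNZ : (N : ℤ) = -n := Int.toNat_of_nonneg (by omega)
  have hsum : Summable fun k : ℕ => α ^ k • fc Φ (n + k) y :=
    bp_summable_fc hΦ hα y fun k => n + k
  have hzero : ∀ i ∈ Finset.range N, α ^ i • fc Φ (n + i) y = 0 := by
    intro i hi
    rw [hΦ.neg (n + i) (by rw [Finset.mem_range] at hi; omega) y, smul_zero]
  have := Summable.sum_add_tsum_nat_add (f := fun k : ℕ => α ^ k • fc Φ (n + k) y) N hsum
  rw [Finset.sum_eq_zero hzero, zero_add] at this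
  rw [← this]
  have heq : ∀ i : ℕ, α ^ (i + N) • fc Φ (n + (i + N : ℕ)) y
      = α ^ N • (α ^ i • fc Φ (i : ℤ) y) := by
    intro i
    have : (n + (i + N : ℕ) : ℤ) = (i : ℤ) := by push_cast; omega
    rw [this, pow_add, mul_comm, mul_smul]
  simp_rw [heq]
  rw [Summable.tsum_const_smul _ (bp_summable_fc hΦ hα y fun k => (k : ℤ))]
  rfl

-- blaschke facts

lemma bp_denom_ne {α z : ℂ} (hα : ‖α‖ < 1) (hz : ‖z‖ = 1) :
    1 - (starRingEnd ℂ) α * z ≠ 0 := by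
  intro h
  rw [sub_eq_zero] at h
  have : ‖(1:ℂ)‖ = ‖α‖ := by rw [h, norm_mul, RCLike.norm_conj, hz, mul_one]
  rw [norm_one] at this
  linarith

lemma bp_norm_blaschke {α z : ℂ} (hα : ‖α‖ < 1) (hz : ‖z‖ = 1) : ‖blaschke α z‖ = 1 := by
  have hd := bp_denom_ne hα hz
  have hnum : ‖z - α‖ = ‖1 - (starRingEnd ℂ) α * z‖ := by
    have : 1 - (starRingEnd ℂ) α * z = ((starRingEnd ℂ) z - (starRingEnd ℂ) α) * z := by
      rw [sub_mul, bp_conj_mul_self hz]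
    rw [this, norm_mul, hz, mul_one, ← map_sub, RCLike.norm_conj]
  have h0 : ‖z - α‖ ≠ 0 := by rw [hnum]; exact norm_ne_zero_iff.mpr hd
  rw [blaschke, norm_div, ← hnum, div_self h0]

lemma bp_conj_blaschke_mul {α z : ℂ} (hα : ‖α‖ < 1) (hz : ‖z‖ = 1) :
    (starRingEnd ℂ) (blaschke α z) * blaschke α z = 1 :=
  bp_conj_mul_self (bp_norm_blaschke hα hz)

lemma bp_meas_blaschke (α : ℂ) : Measurable (blaschke α) :=
  (measurable_id.sub_const α).div (measurable_const.sub (measurable_const_mul _))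

lemma bp_key1 {Φ : ℂ → D →L[ℂ] E} (hΦ : MemHinf Φ) {α : ℂ} (hα : ‖α‖ < 1) {y : D}
    (hy : poissonFn Φ α y = 0) {n : ℤ} (hn : n < 0) :
    ∫ z, ((starRingEnd ℂ) z) ^ n • ((starRingEnd ℂ) (blaschke α z) • Φ z y) ∂mT = 0 := by
  obtain ⟨r, hr0, hr⟩ := bp_bdd' hΦ
  set c : ℂ := (starRingEnd ℂ) α with hc
  set F : ℕ → ℂ → E := fun k z =>
    (α ^ k • (((starRingEnd ℂ) z) ^ (n + k + 1) • Φ z y)) -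
      ((c * α ^ k) • (((starRingEnd ℂ) z) ^ (n + k) • Φ z y)) with hF
  have hcn : ‖c‖ = ‖α‖ := RCLike.norm_conj α
  have hFmeas : ∀ k, AEStronglyMeasurable (F k) mT := fun k =>
    ((bp_asm_integrand hΦ _ y).const_smul _).sub ((bp_asm_integrand hΦ _ y).const_smul _)
  have hFbd : ∀ k, ∀ᵐ z ∂mT, ‖F k z‖ ≤ 2 * (r * ‖y‖) * ‖α‖ ^ k := by
    intro k
    filter_upwards [bp_ae_norm, hr] with z hz hrz
    have hb : ∀ m : ℤ, ‖((starRingEnd ℂ) z) ^ m • Φ z y‖ ≤ r * ‖y‖ := fun m => by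
      rw [norm_smul, bp_norm_conj_zpow hz, one_mul]
      exact ((Φ z).le_opNorm y).trans (mul_le_mul_of_nonneg_right hrz (norm_nonneg y))
    calc ‖F k z‖ ≤ ‖α ^ k • (((starRingEnd ℂ) z) ^ (n + k + 1) • Φ z y)‖ +
          ‖(c * α ^ k) • (((starRingEnd ℂ) z) ^ (n + k) • Φ z y)‖ := norm_sub_le _ _
      _ ≤ ‖α‖ ^ k * (r * ‖y‖) + (‖α‖ * ‖α‖ ^ k) * (r * ‖y‖) := by
          refine add_le_add ?_ ?_
          · rw [norm_smul, norm_pow]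
            exact mul_le_mul_of_nonneg_left (hb _) (pow_nonneg (norm_nonneg α) k)
          · rw [norm_smul, norm_mul, hcn, norm_pow]
            exact mul_le_mul_of_nonneg_left (hb _)
              (mul_nonneg (norm_nonneg α) (pow_nonneg (norm_nonneg α) k))
      _ ≤ 2 * (r * ‖y‖) * ‖α‖ ^ k := by
          nlinarith [mul_nonneg (pow_nonneg (norm_nonneg α) k) (mul_nonneg hr0 (norm_nonneg y)), hα.le,
            pow_nonneg (norm_nonneg α) k, mul_nonneg hr0 (norm_nonneg y)]
  have hFint : ∀ k, Integrable (F k) mT := fun k => bp_integrable_of_bdd (hFmeas k) (hFbd k)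
  have hFnorm : Summable fun k => ∫ z, ‖F k z‖ ∂mT := by
    refine Summable.of_nonneg_of_le (fun k => integral_nonneg fun z => norm_nonneg _)
      (fun k => ?_) ((summable_geometric_of_lt_one (norm_nonneg α) hα).mul_left (2 * (r * ‖y‖)))
    calc ∫ z, ‖F k z‖ ∂mT ≤ ∫ _z, 2 * (r * ‖y‖) * ‖α‖ ^ k ∂mT :=
          integral_mono_ae (hFint k).norm (integrable_const _) (hFbd k)
      _ = 2 * (r * ‖y‖) * ‖α‖ ^ k := by simp
  have hpt : ∀ᵐ z ∂mT, HasSum (fun k => F k z)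
      (((starRingEnd ℂ) z) ^ n • ((starRingEnd ℂ) (blaschke α z) • Φ z y)) := by
    filter_upwards [bp_ae_norm] with z hz
    set w : ℂ := (starRingEnd ℂ) z with hw
    have hw1 : ‖w‖ = 1 := by rw [hw, RCLike.norm_conj]; exact hz
    have hw0 : w ≠ 0 := bp_ne_zero hw1
    have hαw : ‖α * w‖ < 1 := by rw [norm_mul, hw1, mul_one]; exact hα
    have hgeo : HasSum (fun k : ℕ => (α * w) ^ k) (1 - α * w)⁻¹ :=
      hasSum_geometric_of_norm_lt_one hαw
    have hcb : (starRingEnd ℂ) (blaschke α z) = (w - c) * (1 - α * w)⁻¹ := by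
      rw [blaschke, map_div₀, map_sub, map_sub, map_one, map_mul, Complex.conj_conj,
        div_eq_mul_inv]
    have hsum := (hgeo.mul_left (w ^ n * (w - c))).smul_const (Φ z y)
    have hterm : ∀ k : ℕ, (w ^ n * (w - c) * (α * w) ^ k) • Φ z y = F k z := by
      intro k
      rw [hF]
      simp only [smul_smul]
      rw [← sub_smul]
      congr 1
      rw [zpow_add₀ hw0 (n + k) 1, zpow_add₀ hw0 n (k : ℤ), zpow_one, zpow_natCast, mul_pow]
      ring
    rw [show ((starRingEnd ℂ) z) ^ n • ((starRingEnd ℂ) (blaschke α z) • Φ z y)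
        = (w ^ n * (w - c) * (1 - α * w)⁻¹) • Φ z y by rw [smul_smul, hcb, ← hw]; ring_nf]
    exact (funext hterm : _) ▸ hsum
  have hiti := integral_tsum_of_summable_integral_norm hFint hFnorm
  rw [integral_congr_ae (hpt.mono fun z h => h.tsum_eq.symm), ← hiti]
  have hik : ∀ k, ∫ z, F k z ∂mT
      = α ^ k • fc Φ (n + k + 1) y - c • (α ^ k • fc Φ (n + k) y) := by
    intro k
    rw [hF]
    simp only
    have h1 : Integrable (fun z => α ^ k • (((starRingEnd ℂ) z) ^ (n + k + 1) • Φ z y)) mT :=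
      (bp_integrable_integrand hΦ (n + k + 1) y).smul (α ^ k)
    have h2 : Integrable (fun z => (c * α ^ k) • (((starRingEnd ℂ) z) ^ (n + k) • Φ z y)) mT :=
      (bp_integrable_integrand hΦ (n + k) y).smul (c * α ^ k)
    rw [integral_sub h1 h2, integral_smul, integral_smul, mul_smul]
    rfl
  simp_rw [hik]
  have hs1 : Summable fun k : ℕ => α ^ k • fc Φ (n + k + 1) y :=
    bp_summable_fc hΦ hα y fun k => n + k + 1
  have hs2 : Summable fun k : ℕ => α ^ k • fc Φ (n + k) y :=
    bp_summable_fc hΦ hα y fun k => n + k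
  rw [Summable.tsum_sub hs1 (hs2.const_smul c)]
  have e1 : ∑' k : ℕ, α ^ k • fc Φ (n + k + 1) y = 0 := by
    have : ∀ k : ℕ, α ^ k • fc Φ (n + k + 1) y = α ^ k • fc Φ ((n + 1) + k) y := by
      intro k; congr 2; omega
    simp_rw [this]
    rw [bp_tsum_shift hΦ hα y (by omega), hy, smul_zero]
  have e2 : ∑' k : ℕ, c • (α ^ k • fc Φ (n + k) y) = 0 := by
    rw [Summable.tsum_const_smul c hs2, bp_tsum_shift hΦ hα y (by omega), hy, smul_zero, smul_zero]
  rw [e1, e2, sub_zero]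

lemma bp_key2 {α : ℂ} (hα : ‖α‖ < 1) (v : E) {n : ℤ} (hn : n < 0) :
    ∫ z, ((starRingEnd ℂ) z) ^ n • (blaschke α z • v) ∂mT = 0 := by
  set c : ℂ := (starRingEnd ℂ) α with hc
  have hcn : ‖c‖ = ‖α‖ := RCLike.norm_conj α
  set F : ℕ → ℂ → E := fun k z =>
    (c ^ k • (z ^ ((k : ℤ) + 1 - n) • v)) - ((α * c ^ k) • (z ^ ((k : ℤ) - n) • v)) with hF
  have hzmeas : ∀ m : ℤ, AEStronglyMeasurable (fun z : ℂ => z ^ m • v) mT :=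
    fun m => ((measurable_id.pow_const m).aestronglyMeasurable).smul aestronglyMeasurable_const
  have hFmeas : ∀ k, AEStronglyMeasurable (F k) mT := fun k =>
    ((hzmeas _).const_smul _).sub ((hzmeas _).const_smul _)
  have hFbd : ∀ k, ∀ᵐ z ∂mT, ‖F k z‖ ≤ 2 * ‖v‖ * ‖α‖ ^ k := by
    intro k
    filter_upwards [bp_ae_norm] with z hz
    have hb : ∀ m : ℤ, ‖z ^ m • v‖ ≤ ‖v‖ := fun m => by
      rw [norm_smul, norm_zpow, hz, one_zpow, one_mul]
    calc ‖F k z‖ ≤ ‖c ^ k • (z ^ ((k : ℤ) + 1 - n) • v)‖ +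
          ‖(α * c ^ k) • (z ^ ((k : ℤ) - n) • v)‖ := norm_sub_le _ _
      _ ≤ ‖α‖ ^ k * ‖v‖ + (‖α‖ * ‖α‖ ^ k) * ‖v‖ := by
          refine add_le_add ?_ ?_
          · rw [norm_smul, norm_pow, hcn]
            exact mul_le_mul_of_nonneg_left (hb _) (pow_nonneg (norm_nonneg α) k)
          · rw [norm_smul, norm_mul, norm_pow, hcn]
            exact mul_le_mul_of_nonneg_left (hb _)
              (mul_nonneg (norm_nonneg α) (pow_nonneg (norm_nonneg α) k))
      _ ≤ 2 * ‖v‖ * ‖α‖ ^ k := by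
          nlinarith [mul_nonneg (pow_nonneg (norm_nonneg α) k) (norm_nonneg (v : E)), hα.le,
            pow_nonneg (norm_nonneg α) k, norm_nonneg (v : E)]
  have hFint : ∀ k, Integrable (F k) mT := fun k => bp_integrable_of_bdd (hFmeas k) (hFbd k)
  have hFnorm : Summable fun k => ∫ z, ‖F k z‖ ∂mT := by
    refine Summable.of_nonneg_of_le (fun k => integral_nonneg fun z => norm_nonneg _)
      (fun k => ?_) ((summable_geometric_of_lt_one (norm_nonneg α) hα).mul_left (2 * ‖v‖))
    calc ∫ z, ‖F k z‖ ∂mT ≤ ∫ _z, 2 * ‖v‖ * ‖α‖ ^ k ∂mT :=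
          integral_mono_ae (hFint k).norm (integrable_const _) (hFbd k)
      _ = 2 * ‖v‖ * ‖α‖ ^ k := by simp
  have hpt : ∀ᵐ z ∂mT, HasSum (fun k => F k z)
      (((starRingEnd ℂ) z) ^ n • (blaschke α z • v)) := by
    filter_upwards [bp_ae_norm] with z hz
    have hz0 : z ≠ 0 := bp_ne_zero hz
    have hcz : ‖c * z‖ < 1 := by rw [norm_mul, hcn, hz, mul_one]; exact hα
    have hgeo : HasSum (fun k : ℕ => (c * z) ^ k) (1 - c * z)⁻¹ :=
      hasSum_geometric_of_norm_lt_one hcz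
    have hsum := (hgeo.mul_left (z ^ (-n) * (z - α))).smul_const v
    have hterm : ∀ k : ℕ, (z ^ (-n) * (z - α) * (c * z) ^ k) • v = F k z := by
      intro k
      rw [hF]
      simp only [smul_smul]
      rw [← sub_smul]
      congr 1
      have h1 : z ^ ((k : ℤ) + 1 - n) = z ^ (-n) * z ^ (k : ℕ) * z := by
        rw [show ((k : ℤ) + 1 - n) = (-n) + (k : ℤ) + 1 by ring, zpow_add₀ hz0,
          zpow_add₀ hz0, zpow_one, zpow_natCast]
      have h2 : z ^ ((k : ℤ) - n) = z ^ (-n) * z ^ (k : ℕ) := by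
        rw [show ((k : ℤ) - n) = (-n) + (k : ℤ) by ring, zpow_add₀ hz0, zpow_natCast]
      rw [h1, h2, mul_pow]
      ring
    rw [show ((starRingEnd ℂ) z) ^ n • (blaschke α z • v)
        = (z ^ (-n) * (z - α) * (1 - c * z)⁻¹) • v by
      rw [smul_smul, bp_conj_eq_inv hz, inv_zpow, ← zpow_neg, blaschke, div_eq_mul_inv, ← hc]
      ring_nf]
    exact (funext hterm : _) ▸ hsum
  have hiti := integral_tsum_of_summable_integral_norm hFint hFnorm
  rw [integral_congr_ae (hpt.mono fun z h => h.tsum_eq.symm), ← hiti]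
  have hint : ∀ m : ℤ, Integrable (fun z : ℂ => z ^ m • v) mT := fun m =>
    bp_integrable_of_bdd (hzmeas m) (C := ‖v‖) (bp_ae_norm.mono fun z hz => by
      rw [norm_smul, norm_zpow, hz, one_zpow, one_mul])
  have hik : ∀ k : ℕ, ∫ z, F k z ∂mT = 0 := by
    intro k
    rw [hF]
    simp only
    have h1 : Integrable (fun z : ℂ => c ^ k • (z ^ ((k : ℤ) + 1 - n) • v)) mT :=
      (hint _).smul (c ^ k)
    have h2 : Integrable (fun z : ℂ => (α * c ^ k) • (z ^ ((k : ℤ) - n) • v)) mT :=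
      (hint _).smul (α * c ^ k)
    rw [integral_sub h1 h2, integral_smul, integral_smul,
      bp_integral_zpow_smul (by omega : ((k : ℤ) + 1 - n) ≠ 0) v,
      bp_integral_zpow_smul (by omega : ((k : ℤ) - n) ≠ 0) v, smul_zero, smul_zero, sub_zero]
  simp_rw [hik]
  exact tsum_zero

lemma bp_proj_apply {P : E →L[ℂ] E} (hP2 : P.comp P = P) (u : E) : P (P u) = P u := by
  have := ContinuousLinearMap.ext_iff.mp hP2 u
  simpa using this

lemma bp_adjoint (P : E →L[ℂ] E) (hPadj : ContinuousLinearMap.adjoint P = P) (b : ℂ) :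
    ContinuousLinearMap.adjoint (b • P + (1 - P)) = (starRingEnd ℂ) b • P + (1 - P) := by
  rw [map_add, map_sub, map_smulₛₗ, hPadj]
  congr 2
  rw [ContinuousLinearMap.one_def]
  exact ContinuousLinearMap.adjoint_id

lemma bp_unit {P : E →L[ℂ] E} (hP2 : P.comp P = P) {b : ℂ} (hb : (starRingEnd ℂ) b * b = 1) :
    ((starRingEnd ℂ) b • P + (1 - P)).comp (b • P + (1 - P)) = ContinuousLinearMap.id ℂ E := by
  ext x
  simp only [ContinuousLinearMap.comp_apply, ContinuousLinearMap.add_apply,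
    ContinuousLinearMap.smul_apply, ContinuousLinearMap.sub_apply, ContinuousLinearMap.one_apply,
    ContinuousLinearMap.coe_id', id_eq, map_add, _root_.map_smul, map_sub,
    bp_proj_apply hP2, smul_smul, hb, one_smul]
  simp only [sub_self, add_zero, smul_smul, mul_comm b, hb, one_smul]
  abel

/-- Let `Φ ∈ H^∞(𝕋, B(E))` and `α ∈ 𝔻`. If the Poisson integral
`P[Φ](α)` is not injective, then, with `M := ker P[Φ](α)` (a nonzero closed subspace)
and `P_M` the orthogonal projection onto `M`, the Blaschke-Potapov factor
`b_α P_M + (I - P_M)` is a nontrivial right inner divisor of `Φ`. -/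
theorem BPFactor_is_nontrivial_rightInnerDivisor (Φ : ℂ → E →L[ℂ] E) (hΦ : MemHinf Φ)
    (α : ℂ) (hα : ‖α‖ < 1) (hni : ¬ Function.Injective (poissonFn Φ α))
    (P : E →L[ℂ] E) (hP : IsOrthoProj P)
    (hPrange : (LinearMap.range (P : E →ₗ[ℂ] E) : Set E) = {x : E | poissonFn Φ α x = 0}) :
    (LinearMap.range (P : E →ₗ[ℂ] E) ≠ ⊥) ∧
    IsRightInnerDiv (fun z => blaschke α z • P + (1 - P)) Φ ∧
    ¬ ∃ U : E →L[ℂ] E, IsUnitaryOp U ∧ ∀ᵐ z ∂mT, blaschke α z • P + (1 - P) = U := by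
  obtain ⟨hP2, hPadj⟩ := hP
  have hker : ∀ x : E, poissonFn Φ α (P x) = 0 := by
    intro x
    have hx : P x ∈ (LinearMap.range (P : E →ₗ[ℂ] E) : Set E) := ⟨x, rfl⟩
    rw [hPrange] at hx
    exact hx
  have hsummp : ∀ x : E, Summable fun k : ℕ => α ^ k • fc Φ (k : ℤ) x :=
    fun x => bp_summable_fc hΦ hα x fun k => (k : ℤ)
  -- Part 1
  have h1 : LinearMap.range (P : E →ₗ[ℂ] E) ≠ ⊥ := by
    obtain ⟨a, b, hab, hne⟩ := Function.not_injective_iff.mp hni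
    have hsub : poissonFn Φ α (a - b) = 0 := by
      unfold poissonFn at hab ⊢
      have heq : ∀ k : ℕ, α ^ k • fc Φ (k : ℤ) (a - b)
          = α ^ k • fc Φ (k : ℤ) a - α ^ k • fc Φ (k : ℤ) b := by
        intro k; rw [bp_fc_sub hΦ, smul_sub]
      simp_rw [heq]
      rw [Summable.tsum_sub (hsummp a) (hsummp b), hab, sub_self]
    have hmem : a - b ∈ LinearMap.range (P : E →ₗ[ℂ] E) := by
      have : a - b ∈ (LinearMap.range (P : E →ₗ[ℂ] E) : Set E) := by rw [hPrange]; exact hsub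
      exact this
    exact (Submodule.ne_bot_iff _).mpr ⟨a - b, hmem, sub_ne_zero.mpr hne⟩
  refine ⟨h1, ⟨⟨⟨?meas, ?bdd, ?neg⟩, ?inner⟩, ?div⟩, ?nontriv⟩
  case meas =>
    intro x
    have heq : (fun z => (blaschke α z • P + (1 - P)) x)
        = fun z => blaschke α z • P x + (1 - P) x := by
      funext z
      simp [ContinuousLinearMap.add_apply, ContinuousLinearMap.smul_apply]
    rw [heq]
    exact (((bp_meas_blaschke α).aestronglyMeasurable).smul aestronglyMeasurable_const).add
      aestronglyMeasurable_const
  case bdd =>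
    refine ⟨‖P‖ + ‖(1 : E →L[ℂ] E) - P‖, ?_⟩
    filter_upwards [bp_ae_norm] with z hz
    calc ‖blaschke α z • P + (1 - P)‖ ≤ ‖blaschke α z • P‖ + ‖(1 : E →L[ℂ] E) - P‖ :=
          norm_add_le _ _
      _ ≤ ‖P‖ + ‖(1 : E →L[ℂ] E) - P‖ := by
          rw [norm_smul, bp_norm_blaschke hα hz, one_mul]
  case neg =>
    intro n hn x
    unfold fc
    have hsplit : (fun z => ((starRingEnd ℂ) z) ^ n • ((blaschke α z • P + (1 - P)) x))
        = fun z => ((starRingEnd ℂ) z) ^ n • (blaschke α z • P x)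
          + ((starRingEnd ℂ) z) ^ n • ((1 - P) x) := by
      funext z
      simp only [ContinuousLinearMap.add_apply, ContinuousLinearMap.smul_apply, smul_add]
    have hint1 : Integrable (fun z => ((starRingEnd ℂ) z) ^ n • (blaschke α z • P x)) mT := by
      refine bp_integrable_of_bdd (((continuous_conj.measurable.pow_const n).aestronglyMeasurable).smul
        (((bp_meas_blaschke α).aestronglyMeasurable).smul aestronglyMeasurable_const))
        (C := ‖P x‖) ?_
      filter_upwards [bp_ae_norm] with z hz
      rw [norm_smul, bp_norm_conj_zpow hz, one_mul, norm_smul, bp_norm_blaschke hα hz, one_mul]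
    have hint2 : Integrable (fun z => ((starRingEnd ℂ) z) ^ n • ((1 - P) x)) mT := by
      refine bp_integrable_of_bdd (((continuous_conj.measurable.pow_const n).aestronglyMeasurable).smul
        aestronglyMeasurable_const) (C := ‖(1 - P) x‖) ?_
      filter_upwards [bp_ae_norm] with z hz
      rw [norm_smul, bp_norm_conj_zpow hz, one_mul]
    rw [hsplit, integral_add hint1 hint2, bp_key2 hα (P x) hn,
      bp_integral_conj_zpow_smul (by omega) ((1 - P) x), add_zero]
  case inner =>
    filter_upwards [bp_ae_norm] with z hz
    rw [bp_adjoint P hPadj (blaschke α z)]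
    exact bp_unit hP2 (bp_conj_blaschke_mul hα hz)
  case div =>
    refine ⟨fun z => (Φ z).comp ((starRingEnd ℂ) (blaschke α z) • P + (1 - P)), ⟨?_, ?_, ?_⟩, ?_⟩
    · intro x
      have heq : (fun z => ((Φ z).comp ((starRingEnd ℂ) (blaschke α z) • P + (1 - P))) x)
          = fun z => (starRingEnd ℂ) (blaschke α z) • Φ z (P x) + Φ z ((1 - P) x) := by
        funext z
        simp only [ContinuousLinearMap.comp_apply, ContinuousLinearMap.add_apply,
          ContinuousLinearMap.smul_apply, map_add, _root_.map_smul]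
      rw [heq]
      exact (((continuous_conj.measurable.comp (bp_meas_blaschke α)).aestronglyMeasurable).smul
        (hΦ.meas (P x))).add (hΦ.meas ((1 - P) x))
    · obtain ⟨r, hr0, hr⟩ := bp_bdd' hΦ
      refine ⟨r * (‖P‖ + ‖(1 : E →L[ℂ] E) - P‖), ?_⟩
      filter_upwards [bp_ae_norm, hr] with z hz hrz
      calc ‖(Φ z).comp ((starRingEnd ℂ) (blaschke α z) • P + (1 - P))‖
          ≤ ‖Φ z‖ * ‖(starRingEnd ℂ) (blaschke α z) • P + (1 - P)‖ :=
            ContinuousLinearMap.opNorm_comp_le _ _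
        _ ≤ r * (‖P‖ + ‖(1 : E →L[ℂ] E) - P‖) := by
            refine mul_le_mul hrz ?_ (norm_nonneg _) hr0
            calc ‖(starRingEnd ℂ) (blaschke α z) • P + (1 - P)‖
                ≤ ‖(starRingEnd ℂ) (blaschke α z) • P‖ + ‖(1 : E →L[ℂ] E) - P‖ := norm_add_le _ _
              _ ≤ ‖P‖ + ‖(1 : E →L[ℂ] E) - P‖ := by
                  rw [norm_smul, RCLike.norm_conj, bp_norm_blaschke hα hz, one_mul]
    · intro n hn x
      unfold fc
      have hsplit : (fun z => ((starRingEnd ℂ) z) ^ n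
            • (((Φ z).comp ((starRingEnd ℂ) (blaschke α z) • P + (1 - P))) x))
          = fun z => ((starRingEnd ℂ) z) ^ n • ((starRingEnd ℂ) (blaschke α z) • Φ z (P x))
            + ((starRingEnd ℂ) z) ^ n • (Φ z ((1 - P) x)) := by
        funext z
        simp only [ContinuousLinearMap.comp_apply, ContinuousLinearMap.add_apply,
          ContinuousLinearMap.smul_apply, map_add, _root_.map_smul, smul_add]
      obtain ⟨r, hr0, hr⟩ := bp_bdd' hΦ
      have hint1 : Integrable
          (fun z => ((starRingEnd ℂ) z) ^ n • ((starRingEnd ℂ) (blaschke α z) • Φ z (P x))) mT := by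
        refine bp_integrable_of_bdd
          (((continuous_conj.measurable.pow_const n).aestronglyMeasurable).smul
            (((continuous_conj.measurable.comp (bp_meas_blaschke α)).aestronglyMeasurable).smul
              (hΦ.meas (P x)))) (C := r * ‖P x‖) ?_
        filter_upwards [bp_ae_norm, hr] with z hz hrz
        rw [norm_smul, bp_norm_conj_zpow hz, one_mul, norm_smul, RCLike.norm_conj,
          bp_norm_blaschke hα hz, one_mul]
        exact ((Φ z).le_opNorm _).trans (mul_le_mul_of_nonneg_right hrz (norm_nonneg _))
      have hint2 : Integrable (fun z => ((starRingEnd ℂ) z) ^ n • (Φ z ((1 - P) x))) mT :=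
        bp_integrable_integrand hΦ n ((1 - P) x)
      rw [hsplit, integral_add hint1 hint2, bp_key1 hΦ hα (hker x) hn]
      have : ∫ z, ((starRingEnd ℂ) z) ^ n • (Φ z ((1 - P) x)) ∂mT = fc Φ n ((1 - P) x) := rfl
      rw [this, hΦ.neg n hn, add_zero]
    · filter_upwards [bp_ae_norm] with z hz
      rw [ContinuousLinearMap.comp_assoc, bp_unit hP2 (bp_conj_blaschke_mul hα hz),
        ContinuousLinearMap.comp_id]
  case nontriv =>
    rintro ⟨U, hU, hae⟩
    obtain ⟨y, hyP, hy0⟩ := (Submodule.ne_bot_iff _).mp h1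
    obtain ⟨x, hx⟩ := LinearMap.mem_range.mp hyP
    have hPx0 : P x ≠ 0 := by rw [show P x = y from hx]; exact hy0
    have hn2 : ((‖P x‖ : ℂ)) ^ 2 ≠ 0 :=
      pow_ne_zero _ (Complex.ofReal_ne_zero.mpr (norm_ne_zero_iff.mpr hPx0))
    set γ : ℂ := (inner ℂ (P x) (U x - x + P x) : ℂ) / ((‖P x‖ : ℂ) ^ 2) with hγ
    have hγae : ∀ᵐ z ∂mT, blaschke α z = γ := by
      filter_upwards [hae] with z hzU
      have happ := congrArg (fun T : E →L[ℂ] E => T x) hzU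
      simp only [ContinuousLinearMap.add_apply, ContinuousLinearMap.smul_apply,
        ContinuousLinearMap.sub_apply, ContinuousLinearMap.one_apply] at happ
      have hsm : blaschke α z • P x = U x - x + P x := by
        rw [← happ]; abel
      have hinner : (inner ℂ (P x) (U x - x + P x) : ℂ) = blaschke α z * ((‖P x‖ : ℂ)) ^ 2 := by
        rw [← hsm, inner_smul_right, inner_self_eq_norm_sq_to_K]
        norm_cast
      rw [hγ, hinner]
      exact (mul_div_cancel_right₀ (blaschke α z) hn2).symm
    rw [mT] at hγae
    rw [ae_map_iff bp_meas_exp.aemeasurable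
      (by exact (bp_meas_blaschke α) (measurableSet_singleton γ) :
        MeasurableSet {z : ℂ | blaschke α z = γ})] at hγae
    rw [Measure.ae_ennreal_smul_measure_iff (ENNReal.inv_ne_zero.mpr ENNReal.ofReal_ne_top)] at hγae
    set A : Set ℝ := {t : ℝ | blaschke α (Complex.exp (t * Complex.I)) = γ} with hA
    have hAm : MeasurableSet A := by
      exact ((bp_meas_blaschke α).comp bp_meas_exp) (measurableSet_singleton γ)
    have hcompl : volume.restrict (Set.Ioc 0 (2 * Real.pi)) Aᶜ = 0 := ae_iff.mp hγae
    have hsub : (A ∩ Set.Ioc 0 (2 * Real.pi)).Subsingleton := by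
      rintro t₁ ⟨ht₁, ht₁'⟩ t₂ ⟨ht₂, ht₂'⟩
      have e1 : ‖Complex.exp ((t₁ : ℂ) * Complex.I)‖ = 1 := by
        simp [Complex.norm_exp_ofReal_mul_I]
      have e2 : ‖Complex.exp ((t₂ : ℂ) * Complex.I)‖ = 1 := by
        simp [Complex.norm_exp_ofReal_mul_I]
      have hbe : blaschke α (Complex.exp ((t₁ : ℂ) * Complex.I))
          = blaschke α (Complex.exp ((t₂ : ℂ) * Complex.I)) := ht₁.trans ht₂.symm
      have hd1 := bp_denom_ne hα e1
      have hd2 := bp_denom_ne hα e2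
      rw [blaschke, blaschke, div_eq_div_iff hd1 hd2] at hbe
      have key : ((1 : ℂ) - (starRingEnd ℂ) α * α)
          * (Complex.exp ((t₁ : ℂ) * Complex.I) - Complex.exp ((t₂ : ℂ) * Complex.I)) = 0 := by
        linear_combination hbe
      have hone : (1 : ℂ) - (starRingEnd ℂ) α * α ≠ 0 := by
        intro h
        rw [sub_eq_zero] at h
        have : ‖(1:ℂ)‖ = ‖α‖ * ‖α‖ := by rw [h, norm_mul, RCLike.norm_conj]
        rw [norm_one] at this
        nlinarith [norm_nonneg α]
      have hee : Complex.exp ((t₁ : ℂ) * Complex.I) = Complex.exp ((t₂ : ℂ) * Complex.I) := by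
        rcases mul_eq_zero.mp key with h | h
        · exact absurd h hone
        · exact sub_eq_zero.mp h
      rw [Complex.exp_eq_exp_iff_exists_int] at hee
      obtain ⟨k, hk⟩ := hee
      have hc : (t₁ : ℂ) = (t₂ : ℂ) + (k : ℂ) * (2 * Real.pi) := by
        have h2 : (t₁ : ℂ) * Complex.I = ((t₂ : ℂ) + (k : ℂ) * (2 * Real.pi)) * Complex.I := by
          rw [hk]; ring
        exact mul_right_cancel₀ Complex.I_ne_zero h2
      have hrr : t₁ = t₂ + (k : ℝ) * (2 * Real.pi) := by exact_mod_cast hc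
      have hπ := Real.pi_pos
      have hk0 : k = 0 := by
        have habs : |(k : ℝ)| < 1 := by
          rw [abs_lt]
          constructor <;> nlinarith [ht₁'.1, ht₁'.2, ht₂'.1, ht₂'.2]
        have : |k| < 1 := by exact_mod_cast habs
        have := abs_lt.mp this
        omega
      rw [hk0] at hrr
      simpa using hrr
    have hAvol : volume.restrict (Set.Ioc 0 (2 * Real.pi)) A = 0 := by
      rw [Measure.restrict_apply hAm]
      exact hsub.measure_zero _
    have huniv : volume.restrict (Set.Ioc 0 (2 * Real.pi)) Set.univ = 0 := by
      have hle := measure_union_le (μ := volume.restrict (Set.Ioc 0 (2 * Real.pi))) A Aᶜ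
      rw [Set.union_compl_self, hAvol, hcompl, add_zero] at hle
      exact le_antisymm hle zero_le
    rw [Measure.restrict_apply_univ, Real.volume_Ioc] at huniv
    rw [ENNReal.ofReal_eq_zero] at huniv
    nlinarith [Real.pi_pos]

end
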